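/- Let I, T, S ≥ 1 be integers and ε ≥ 0. Let ŵ^1, …, ŵ^S ∈ ℝ^{I×T} be samples (entries indexed by pairs (i,t)), and let Ω := ∏_{i,t} [l_{it}, u_{it}] be a box with l_{it} ≤ ŵ^s_{it} ≤ u_{it} for all i, t, s. Let c_t, c⁰_t ∈ ℝ for t ∈ {1,…,T} and define h(w) := ∑_{t=1}^T ( c_t ∑_{i=1}^I w_{it} + c⁰_t ). Define v̄^s_{it} := u_{it} − ŵ^s_{it}, v̲^s_{it} := l_{it} − ŵ^s_{it}, z̄⁺_t := ∑_{i=1}^I ∑_{s=1}^S v̄^s_{it}, z̄⁻_t := −∑_{i=1}^I ∑_{s=1}^S v̲^s_{it}, g^c := ∑_{t=1}^T ( c_t (1/S) ∑_{i=1}^I ∑_{s=1}^S ŵ^s_{it} + c⁰_t ), and let g^v be the supremum of (1/S) ∑_{t=1}^T c_t (z⁺_t − z⁻_t) over all z⁺_t, z⁻_t ≥ 0 with (1/S) ∑_{t=1}^T (z⁺_t + z⁻_t) ≤ ε, z⁺_t ≤ z̄⁺_t and z⁻_t ≤ z̄⁻_t for all t. Then the supremum of ∫ h dP over all Borel probability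 measures P on ℝ^{I×T} with P(Ω) = 1 and d_w(P, P_e) ≤ ε equals g^c + g^v. -/

import Mathlib

open MeasureTheory
open scoped ENNReal

lemma integrable_dirac_of {α E : Type*} [MeasurableSpace α] [MeasurableSingletonClass α]
    [NormedAddCommGroup E] {f : α → E} (hf : StronglyMeasurable f) (a : α) :
    Integrable f (Measure.dirac a) :=
  ⟨hf.aestronglyMeasurable, by
    simpa [HasFiniteIntegral, lintegral_dirac] using ENNReal.coe_lt_top⟩

lemma sum_rot {g1 g2 g3 M : Type*} [Fintype g1] [Fintype g2] [Fintype g3] [AddCommMonoid M]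
    (f : g1 → g2 → g3 → M) :
    ∑ a, ∑ b, ∑ c, f a b c = ∑ c, ∑ b, ∑ a, f a b c := by
  calc ∑ a, ∑ b, ∑ c, f a b c
      = ∑ a, ∑ c, ∑ b, f a b c := Finset.sum_congr rfl fun a _ => Finset.sum_comm
    _ = ∑ c, ∑ a, ∑ b, f a b c := Finset.sum_comm
    _ = ∑ c, ∑ b, ∑ a, f a b c := Finset.sum_congr rfl fun c _ => Finset.sum_comm

set_option maxHeartbeats 2000000 in
theorem stmt4
    (I T S : ℕ) (hI : 1 ≤ I) (hT : 1 ≤ T) (hS : 1 ≤ S)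
    (ε : ℝ) (hε : 0 ≤ ε)
    (what : Fin S → Fin I → Fin T → ℝ)
    (l u : Fin I → Fin T → ℝ)
    (hl : ∀ i t s, l i t ≤ what s i t) (hu : ∀ i t s, what s i t ≤ u i t)
    (c c0 : Fin T → ℝ)
    (gc : ℝ)
    (hgc : gc = ∑ t, (c t * ((1 / (S : ℝ)) * ∑ i, ∑ s, what s i t) + c0 t))
    (zubp zubm : Fin T → ℝ)
    (hzubp : ∀ t, zubp t = ∑ i, ∑ s, (u i t - what s i t))
    (hzubm : ∀ t, zubm t = -∑ i, ∑ s, (l i t - what s i t))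
    (gv : ℝ)
    (hgv : gv = sSup { x : ℝ |
      ∃ zp zm : Fin T → ℝ,
        (∀ t, 0 ≤ zp t) ∧ (∀ t, 0 ≤ zm t) ∧
        (1 / (S : ℝ)) * ∑ t, (zp t + zm t) ≤ ε ∧
        (∀ t, zp t ≤ zubp t) ∧ (∀ t, zm t ≤ zubm t) ∧
        x = (1 / (S : ℝ)) * ∑ t, c t * (zp t - zm t) }) :
    sSup { x : ℝ |
      ∃ P : Measure (Fin I → Fin T → ℝ), IsProbabilityMeasure P ∧
        P {w | ∀ i t, l i t ≤ w i t ∧ w i t ≤ u i t} = 1 ∧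
        (∀ δ : ℝ, 0 < δ →
          ∃ π : Measure ((Fin I → Fin T → ℝ) × (Fin I → Fin T → ℝ)),
            IsProbabilityMeasure π ∧
            π.map Prod.fst = P ∧
            π.map Prod.snd = (S : ℝ≥0∞)⁻¹ • ∑ s : Fin S, Measure.dirac (what s) ∧
            ∫⁻ p, ENNReal.ofReal (∑ i, ∑ t, |p.1 i t - p.2 i t|) ∂π
              ≤ ENNReal.ofReal (ε + δ)) ∧
        x = ∫ w, (∑ t, (c t * ∑ i, w i t + c0 t)) ∂P } = gc + gv := by
  have hS0 : (S : ℝ) ≠ 0 := by positivity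
  have hSpos : (0:ℝ) < S := by exact_mod_cast hS
  set Box : Set (Fin I → Fin T → ℝ) := {w | ∀ i t, l i t ≤ w i t ∧ w i t ≤ u i t} with hBoxdef
  have hBoxMeas : MeasurableSet Box := by
    have : Box = ⋂ (i : Fin I), ⋂ (t : Fin T),
        {w : Fin I → Fin T → ℝ | l i t ≤ w i t ∧ w i t ≤ u i t} := by
      ext w; simp [hBoxdef, Set.mem_iInter]
    rw [this]
    refine MeasurableSet.iInter fun i => MeasurableSet.iInter fun t => ?_
    have hm : Measurable fun w : Fin I → Fin T → ℝ => w i t :=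
      (measurable_pi_apply t).comp (measurable_pi_apply i)
    exact (measurableSet_le measurable_const hm).inter (measurableSet_le hm measurable_const)
  have hwhatBox : ∀ s, what s ∈ Box := fun s i t => ⟨hl i t s, hu i t s⟩
  set B : Set ℝ := { x : ℝ |
      ∃ zp zm : Fin T → ℝ,
        (∀ t, 0 ≤ zp t) ∧ (∀ t, 0 ≤ zm t) ∧
        (1 / (S : ℝ)) * ∑ t, (zp t + zm t) ≤ ε ∧
        (∀ t, zp t ≤ zubp t) ∧ (∀ t, zm t ≤ zubm t) ∧
        x = (1 / (S : ℝ)) * ∑ t, c t * (zp t - zm t) } with hBdef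
  set A : Set ℝ := { x : ℝ |
      ∃ P : Measure (Fin I → Fin T → ℝ), IsProbabilityMeasure P ∧
        P Box = 1 ∧
        (∀ δ : ℝ, 0 < δ →
          ∃ π : Measure ((Fin I → Fin T → ℝ) × (Fin I → Fin T → ℝ)),
            IsProbabilityMeasure π ∧
            π.map Prod.fst = P ∧
            π.map Prod.snd = (S : ℝ≥0∞)⁻¹ • ∑ s : Fin S, Measure.dirac (what s) ∧
            ∫⁻ p, ENNReal.ofReal (∑ i, ∑ t, |p.1 i t - p.2 i t|) ∂π
              ≤ ENNReal.ofReal (ε + δ)) ∧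
        x = ∫ w, (∑ t, (c t * ∑ i, w i t + c0 t)) ∂P } with hAdef
  have hzubp0 : ∀ t, 0 ≤ zubp t := fun t => by
    rw [hzubp]
    exact Finset.sum_nonneg fun i _ => Finset.sum_nonneg fun s _ => sub_nonneg.2 (hu i t s)
  have hzubm0 : ∀ t, 0 ≤ zubm t := fun t => by
    rw [hzubm, neg_nonneg]
    exact Finset.sum_nonpos fun i _ => Finset.sum_nonpos fun s _ => sub_nonpos.2 (hl i t s)
  have hB0 : (0:ℝ) ∈ B := by
    refine ⟨fun _ => 0, fun _ => 0, fun _ => le_refl 0, fun _ => le_refl 0, by simpa using hε,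
      hzubp0, hzubm0, by simp⟩
  have hBne : B.Nonempty := ⟨0, hB0⟩
  have hBbdd : BddAbove B := by
    refine ⟨(1 / (S : ℝ)) * ∑ t, |c t| * (zubp t + zubm t), fun x hx => ?_⟩
    obtain ⟨zp, zm, hzp0, hzm0, _, hzpU, hzmU, rfl⟩ := hx
    have h1S : (0:ℝ) ≤ 1 / S := by positivity
    refine mul_le_mul_of_nonneg_left (Finset.sum_le_sum fun t _ => ?_) h1S
    calc c t * (zp t - zm t) ≤ |c t * (zp t - zm t)| := le_abs_self _
      _ = |c t| * |zp t - zm t| := by rw [abs_mul]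
      _ ≤ |c t| * (zubp t + zubm t) := by
          refine mul_le_mul_of_nonneg_left ?_ (abs_nonneg _)
          rw [abs_le]
          constructor
          · have := hzp0 t; have := hzmU t; have := hzubp0 t; linarith
          · have := hzm0 t; have := hzpU t; have := hzubm0 t; linarith
  have hSE0 : (S : ℝ≥0∞) ≠ 0 := by
    simp only [ne_eq, Nat.cast_eq_zero]; omega
  have hSET : (S : ℝ≥0∞) ≠ ⊤ := ENNReal.natCast_ne_top S
  have hmeas_eval : ∀ (i : Fin I) (t : Fin T), Measurable fun w : Fin I → Fin T → ℝ => w i t :=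
    fun i t => (measurable_pi_apply t).comp (measurable_pi_apply i)
  have hmeas_sum : ∀ t : Fin T, Measurable fun w : Fin I → Fin T → ℝ => ∑ i, w i t :=
    fun t => Finset.measurable_sum _ fun i _ => hmeas_eval i t
  have hPeBox : ((S : ℝ≥0∞)⁻¹ • ∑ s : Fin S, Measure.dirac (what s)) Box = 1 := by
    have hd : ∀ s : Fin S, Measure.dirac (what s) Box = 1 := fun s => by
      rw [Measure.dirac_apply' _ hBoxMeas, Set.indicator_of_mem (hwhatBox s), Pi.one_apply]
    simp [Measure.smul_apply, Measure.finset_sum_apply, hd, Finset.sum_const,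
      Finset.card_univ, ENNReal.inv_mul_cancel hSE0 hSET]
  have key2 : ∀ y ∈ B, gc + y ∈ A := by
    intro y hy
    obtain ⟨zp, zm, hzp0, hzm0, hsum, hzpU, hzmU, rfl⟩ := hy
    set rp : Fin T → ℝ := fun t => zp t / zubp t with hrpdef
    set rm : Fin T → ℝ := fun t => zm t / zubm t with hrmdef
    have hrp0 : ∀ t, 0 ≤ rp t := fun t => div_nonneg (hzp0 t) (hzubp0 t)
    have hrm0 : ∀ t, 0 ≤ rm t := fun t => div_nonneg (hzm0 t) (hzubm0 t)
    have hrp1 : ∀ t, rp t ≤ 1 := by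
      intro t
      rcases eq_or_lt_of_le (hzubp0 t) with h | h
      · simp [hrpdef, ← h]
      · rw [hrpdef, div_le_one h]; exact hzpU t
    have hrm1 : ∀ t, rm t ≤ 1 := by
      intro t
      rcases eq_or_lt_of_le (hzubm0 t) with h | h
      · simp [hrmdef, ← h]
      · rw [hrmdef, div_le_one h]; exact hzmU t
    have hrpz : ∀ t, rp t * zubp t = zp t := by
      intro t
      rcases eq_or_lt_of_le (hzubp0 t) with h | h
      · have hz : zp t = 0 := le_antisymm (h ▸ hzpU t) (hzp0 t)
        simp [hrpdef, ← h, hz]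
      · exact div_mul_cancel₀ _ (ne_of_gt h)
    have hrmz : ∀ t, rm t * zubm t = zm t := by
      intro t
      rcases eq_or_lt_of_le (hzubm0 t) with h | h
      · have hz : zm t = 0 := le_antisymm (h ▸ hzmU t) (hzm0 t)
        simp [hrmdef, ← h, hz]
      · exact div_mul_cancel₀ _ (ne_of_gt h)
    set w' : Fin S → Fin I → Fin T → ℝ :=
      fun s i t => what s i t + rp t * (u i t - what s i t) + rm t * (l i t - what s i t)
      with hw'def
    have hw'Box : ∀ s, w' s ∈ Box := by
      intro s i t
      have ha : 0 ≤ u i t - what s i t := sub_nonneg.2 (hu i t s)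
      have hb : 0 ≤ what s i t - l i t := sub_nonneg.2 (hl i t s)
      have h1 : 0 ≤ rp t * (u i t - what s i t) := mul_nonneg (hrp0 t) ha
      have h2 : rm t * (what s i t - l i t) ≤ 1 * (what s i t - l i t) :=
        mul_le_mul_of_nonneg_right (hrm1 t) hb
      have h3 : 0 ≤ rm t * (what s i t - l i t) := mul_nonneg (hrm0 t) hb
      have h4 : rp t * (u i t - what s i t) ≤ 1 * (u i t - what s i t) :=
        mul_le_mul_of_nonneg_right (hrp1 t) ha
      have h5 : rm t * (l i t - what s i t) = -(rm t * (what s i t - l i t)) := by ring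
      constructor
      · simp only [hw'def]; rw [h5]; linarith
      · simp only [hw'def]; rw [h5]; linarith
    have hKey : ∀ t, ∑ s, ∑ i, w' s i t = (∑ i, ∑ s, what s i t) + (zp t - zm t) := by
      intro t
      have hswap : ∑ s, ∑ i, w' s i t = ∑ i, ∑ s, w' s i t := Finset.sum_comm
      rw [hswap]
      have hlm : ∑ i, ∑ s, (l i t - what s i t) = -zubm t := by rw [hzubm]; ring
      calc ∑ i, ∑ s, w' s i t
          = (∑ i, ∑ s, what s i t) + rp t * (∑ i, ∑ s, (u i t - what s i t))
            + rm t * (∑ i, ∑ s, (l i t - what s i t)) := by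
            simp only [hw'def, Finset.sum_add_distrib, Finset.mul_sum]
        _ = (∑ i, ∑ s, what s i t) + zp t + rm t * (-zubm t) := by
            rw [← hzubp t, hrpz t, hlm]
        _ = (∑ i, ∑ s, what s i t) + (zp t - zm t) := by
            have := hrmz t; nlinarith [hrmz t]
    have hcost : ∑ s, ∑ i, ∑ t, |w' s i t - what s i t| ≤ ∑ t, (zp t + zm t) := by
      have step1 : ∀ s i t, |w' s i t - what s i t|
          ≤ rp t * (u i t - what s i t) + rm t * (what s i t - l i t) := by
        intro s i t
        have ha : 0 ≤ rp t * (u i t - what s i t) :=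
          mul_nonneg (hrp0 t) (sub_nonneg.2 (hu i t s))
        have hb : 0 ≤ rm t * (what s i t - l i t) :=
          mul_nonneg (hrm0 t) (sub_nonneg.2 (hl i t s))
        have : w' s i t - what s i t
            = rp t * (u i t - what s i t) - rm t * (what s i t - l i t) := by
          simp only [hw'def]; ring
        rw [this, abs_sub_le_iff]
        constructor <;> linarith
      calc ∑ s, ∑ i, ∑ t, |w' s i t - what s i t|
          ≤ ∑ s, ∑ i, ∑ t, (rp t * (u i t - what s i t) + rm t * (what s i t - l i t)) := by
            refine Finset.sum_le_sum fun s _ => Finset.sum_le_sum fun i _ =>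
              Finset.sum_le_sum fun t _ => step1 s i t
        _ = ∑ t, (rp t * (∑ i, ∑ s, (u i t - what s i t))
              + rm t * (∑ i, ∑ s, (what s i t - l i t))) := by
            rw [sum_rot]
            exact Finset.sum_congr rfl fun t _ => by
              simp only [Finset.sum_add_distrib, Finset.mul_sum]
        _ ≤ ∑ t, (zp t + zm t) := by
            refine le_of_eq (Finset.sum_congr rfl fun t _ => ?_)
            rw [← hzubp t, hrpz t]
            have : ∑ i, ∑ s, (what s i t - l i t) = zubm t := by
              rw [hzubm]
              rw [← Finset.sum_neg_distrib]
              refine Finset.sum_congr rfl fun i _ => ?_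
              rw [← Finset.sum_neg_distrib]
              exact Finset.sum_congr rfl fun s _ => by ring
            rw [this, hrmz t]
    have hsum' : ∑ t, (zp t + zm t) ≤ (S:ℝ) * ε := by
      have h := mul_le_mul_of_nonneg_left hsum (le_of_lt hSpos)
      rw [← mul_assoc] at h
      field_simp at h
      calc ∑ t, (zp t + zm t) = (S:ℝ) * ((1 / (S:ℝ)) * ∑ t, (zp t + zm t)) := by
            field_simp
        _ ≤ (S:ℝ) * ε := mul_le_mul_of_nonneg_left hsum (le_of_lt hSpos)
    set P : Measure (Fin I → Fin T → ℝ) :=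
      (S : ℝ≥0∞)⁻¹ • ∑ s : Fin S, Measure.dirac (w' s) with hPdef
    set π : Measure ((Fin I → Fin T → ℝ) × (Fin I → Fin T → ℝ)) :=
      (S : ℝ≥0∞)⁻¹ • ∑ s : Fin S, Measure.dirac ((w' s, what s)) with hπdef
    have hπprob : IsProbabilityMeasure π := by
      constructor
      rw [hπdef]
      simp [Measure.smul_apply, Measure.finset_sum_apply, Finset.sum_const,
        Finset.card_univ, ENNReal.inv_mul_cancel hSE0 hSET]
    have hPprob : IsProbabilityMeasure P := by
      constructor
      rw [hPdef]
      simp [Measure.smul_apply, Measure.finset_sum_apply, Finset.sum_const,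
        Finset.card_univ, ENNReal.inv_mul_cancel hSE0 hSET]
    refine ⟨P, hPprob, ?_, ?_, ?_⟩
    · -- P Box = 1
      have hd : ∀ s : Fin S, Measure.dirac (w' s) Box = 1 := fun s => by
        rw [Measure.dirac_apply' _ hBoxMeas, Set.indicator_of_mem (hw'Box s), Pi.one_apply]
      rw [hPdef]
      simp [Measure.smul_apply, Measure.finset_sum_apply, hd, Finset.sum_const,
        Finset.card_univ, ENNReal.inv_mul_cancel hSE0 hSET]
    · -- coupling
      intro δ hδ
      refine ⟨π, hπprob, ?_, ?_, ?_⟩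
      · refine Measure.ext fun A hA => ?_
        rw [Measure.map_apply measurable_fst hA]
        rw [hπdef, hPdef]
        simp only [Measure.smul_apply, Measure.finset_sum_apply]
        congr 1
        refine Finset.sum_congr rfl fun s _ => ?_
        rw [Measure.dirac_apply' _ (hA.preimage measurable_fst), Measure.dirac_apply' _ hA]
        classical
        rw [Set.indicator_apply, Set.indicator_apply]
        simp
      · refine Measure.ext fun A hA => ?_
        rw [Measure.map_apply measurable_snd hA]
        rw [hπdef]
        simp only [Measure.smul_apply, Measure.finset_sum_apply]
        congr 1
        refine Finset.sum_congr rfl fun s _ => ?_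
        rw [Measure.dirac_apply' _ (hA.preimage measurable_snd), Measure.dirac_apply' _ hA]
        classical
        rw [Set.indicator_apply, Set.indicator_apply]
        simp
      · rw [hπdef, lintegral_smul_measure, lintegral_finset_sum_measure]
        simp only [lintegral_dirac]
        rw [← ENNReal.ofReal_sum_of_nonneg (fun s _ => by positivity)]
        have htot : ∑ s, ∑ i, ∑ t, |w' s i t - what s i t| ≤ (S:ℝ) * (ε + δ) := by
          have h2 : (S:ℝ) * ε ≤ (S:ℝ) * (ε + δ) := by nlinarith
          linarith [hcost, hsum']
        calc (S:ℝ≥0∞)⁻¹ * ENNReal.ofReal (∑ s, ∑ i, ∑ t, |w' s i t - what s i t|)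
            ≤ (S:ℝ≥0∞)⁻¹ * ENNReal.ofReal ((S:ℝ) * (ε + δ)) :=
              mul_le_mul_right (ENNReal.ofReal_le_ofReal htot) _
          _ = (S:ℝ≥0∞)⁻¹ * ((S:ℝ≥0∞) * ENNReal.ofReal (ε + δ)) := by
              rw [ENNReal.ofReal_mul (by positivity), ENNReal.ofReal_natCast]
          _ = ENNReal.ofReal (ε + δ) := by
              rw [← mul_assoc, ENNReal.inv_mul_cancel hSE0 hSET, one_mul]
    · -- value
      have hhc : Continuous fun w : Fin I → Fin T → ℝ => ∑ t, (c t * ∑ i, w i t + c0 t) := by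
        fun_prop
      rw [hPdef, integral_smul_measure,
        integral_finset_sum_measure (fun s _ => integrable_dirac_of hhc.stronglyMeasurable _)]
      simp only [integral_dirac]
      rw [ENNReal.toReal_inv, ENNReal.toReal_natCast, smul_eq_mul]
      have hswap : ∑ s : Fin S, ∑ t, (c t * ∑ i, w' s i t + c0 t)
          = ∑ t, ∑ s : Fin S, (c t * ∑ i, w' s i t + c0 t) := Finset.sum_comm
      have hper : ∀ t, ∑ s : Fin S, (c t * ∑ i, w' s i t + c0 t)
          = c t * ((∑ i, ∑ s, what s i t) + (zp t - zm t)) + (S:ℝ) * c0 t := by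
        intro t
        rw [Finset.sum_add_distrib, ← Finset.mul_sum, hKey t, Finset.sum_const,
          Finset.card_univ, Fintype.card_fin, nsmul_eq_mul]
      rw [hswap]
      simp only [hper]
      rw [hgc, Finset.mul_sum, Finset.mul_sum, ← Finset.sum_add_distrib]
      refine Finset.sum_congr rfl fun t _ => ?_
      field_simp
      ring
  have key1 : ∀ x ∈ A, x ≤ gc + gv := by
    intro x hx
    obtain ⟨P, hPprob, hPbox, hPcoup, hxval⟩ := hx
    have haeBox : ∀ᵐ w ∂P, w ∈ Box := by
      rw [ae_iff]
      have hcompl : {w : Fin I → Fin T → ℝ | ¬ w ∈ Box} = Boxᶜ := rfl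
      rw [hcompl, measure_compl hBoxMeas (measure_ne_top P Box), hPbox, measure_univ, tsub_self]
    have hint : ∀ i t, Integrable (fun w : Fin I → Fin T → ℝ => w i t) P := by
      intro i t
      refine Integrable.mono' (integrable_const (max |l i t| |u i t|))
        ((hmeas_eval i t).aestronglyMeasurable) ?_
      filter_upwards [haeBox] with w hw
      rw [Real.norm_eq_abs, abs_le]
      obtain ⟨h1, h2⟩ := hw i t
      refine ⟨?_, ?_⟩
      · have h3 := neg_abs_le (l i t); have h4 := le_max_left |l i t| |u i t|; linarith
      · have h3 := le_abs_self (u i t); have h4 := le_max_right |l i t| |u i t|; linarith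
    have hintsum : ∀ t, Integrable (fun w : Fin I → Fin T → ℝ => ∑ i, w i t) P :=
      fun t => integrable_finset_sum _ fun i _ => hint i t
    obtain ⟨mt, hmtdef⟩ : ∃ mt : Fin T → ℝ, ∀ t, mt t = ∫ w, (∑ i, w i t) ∂P :=
      ⟨_, fun t => rfl⟩
    obtain ⟨e, hedef⟩ : ∃ e : Fin T → ℝ, ∀ t, e t = (1 / (S:ℝ)) * ∑ i, ∑ s, what s i t :=
      ⟨_, fun t => rfl⟩
    have hSe : ∀ t, (S:ℝ) * e t = ∑ i, ∑ s, what s i t := by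
      intro t; rw [hedef]; field_simp
    have hxg : x = ∑ t, (c t * mt t + c0 t) := by
      rw [hxval]
      rw [integral_finset_sum (μ := P)
        (f := fun t (w : Fin I → Fin T → ℝ) => c t * ∑ i, w i t + c0 t) Finset.univ
        (fun t _ => ((hintsum t).const_mul (c t)).add (integrable_const (c0 t)))]
      refine Finset.sum_congr rfl fun t _ => ?_
      rw [integral_add ((hintsum t).const_mul (c t)) (integrable_const (c0 t)),
        integral_const_mul, integral_const, probReal_univ, one_smul]
      rw [hmtdef t]
    have hzubp' : ∀ t, zubp t = (S:ℝ) * (∑ i, u i t) - ∑ i, ∑ s, what s i t := by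
      intro t
      calc zubp t = ∑ i, ((S:ℝ) * u i t - ∑ s, what s i t) := by
            rw [hzubp]
            refine Finset.sum_congr rfl fun i _ => ?_
            rw [Finset.sum_sub_distrib, Finset.sum_const, Finset.card_univ,
              Fintype.card_fin, nsmul_eq_mul]
        _ = (S:ℝ) * (∑ i, u i t) - ∑ i, ∑ s, what s i t := by
            rw [Finset.sum_sub_distrib, Finset.mul_sum]
    have hzubm' : ∀ t, zubm t = (∑ i, ∑ s, what s i t) - (S:ℝ) * (∑ i, l i t) := by
      intro t
      have : -zubm t = (S:ℝ) * (∑ i, l i t) - ∑ i, ∑ s, what s i t := by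
        rw [hzubm, neg_neg]
        calc (∑ i, ∑ s, (l i t - what s i t))
            = ∑ i, ((S:ℝ) * l i t - ∑ s, what s i t) := by
              refine Finset.sum_congr rfl fun i _ => ?_
              rw [Finset.sum_sub_distrib, Finset.sum_const, Finset.card_univ,
                Fintype.card_fin, nsmul_eq_mul]
          _ = (S:ℝ) * (∑ i, l i t) - ∑ i, ∑ s, what s i t := by
              rw [Finset.sum_sub_distrib, Finset.mul_sum]
      linarith
    have hmtub : ∀ t, mt t ≤ ∑ i, u i t := by
      intro t
      have hmono := integral_mono_ae (hintsum t) (integrable_const (∑ i, u i t))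
        (by filter_upwards [haeBox] with w hw
            exact Finset.sum_le_sum fun i _ => (hw i t).2)
      rw [hmtdef t]
      calc ∫ w, (∑ i, w i t) ∂P ≤ ∫ _w, (∑ i, u i t) ∂P := hmono
        _ = ∑ i, u i t := by
            rw [integral_const, probReal_univ, one_smul]
    have hmtlb : ∀ t, ∑ i, l i t ≤ mt t := by
      intro t
      have hmono := integral_mono_ae (integrable_const (∑ i, l i t)) (hintsum t)
        (by filter_upwards [haeBox] with w hw
            exact Finset.sum_le_sum fun i _ => (hw i t).1)
      rw [hmtdef t]
      calc ∑ i, l i t = ∫ _w, (∑ i, l i t) ∂P := by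
            rw [integral_const, probReal_univ, one_smul]
        _ ≤ ∫ w, (∑ i, w i t) ∂P := hmono
    have hdub : ∀ t, (S:ℝ) * (mt t - e t) ≤ zubp t := by
      intro t
      have h1 := hmtub t
      have h2 := hSe t
      have h3 := hzubp' t
      nlinarith
    have hdlb : ∀ t, -((S:ℝ) * (mt t - e t)) ≤ zubm t := by
      intro t
      have h1 := hmtlb t
      have h2 := hSe t
      have h3 := hzubm' t
      nlinarith
    have hd1 : ∑ t, |mt t - e t| ≤ ε := by
      by_contra hcon
      push_neg at hcon
      set δ := (∑ t, |mt t - e t| - ε) / 2 with hδdef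
      have hδpos : 0 < δ := by rw [hδdef]; linarith
      obtain ⟨π, hπprob, hπ1, hπ2, hπc⟩ := hPcoup δ hδpos
      have hae1 : ∀ᵐ p ∂π, p.1 ∈ Box := by
        rw [ae_iff]
        have hpre : π (Prod.fst ⁻¹' Box) = 1 := by
          rw [← Measure.map_apply measurable_fst hBoxMeas, hπ1, hPbox]
        have hcompl : {p : (Fin I → Fin T → ℝ) × (Fin I → Fin T → ℝ) | ¬ p.1 ∈ Box}
            = (Prod.fst ⁻¹' Box)ᶜ := rfl
        rw [hcompl, measure_compl (hBoxMeas.preimage measurable_fst) (measure_ne_top _ _),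
          hpre, measure_univ, tsub_self]
      have hae2 : ∀ᵐ p ∂π, p.2 ∈ Box := by
        rw [ae_iff]
        have hpre : π (Prod.snd ⁻¹' Box) = 1 := by
          rw [← Measure.map_apply measurable_snd hBoxMeas, hπ2, hPeBox]
        have hcompl : {p : (Fin I → Fin T → ℝ) × (Fin I → Fin T → ℝ) | ¬ p.2 ∈ Box}
            = (Prod.snd ⁻¹' Box)ᶜ := rfl
        rw [hcompl, measure_compl (hBoxMeas.preimage measurable_snd) (measure_ne_top _ _),
          hpre, measure_univ, tsub_self]
      have hi1 : ∀ i t, Integrable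
          (fun p : (Fin I → Fin T → ℝ) × (Fin I → Fin T → ℝ) => p.1 i t) π := by
        intro i t
        refine Integrable.mono' (integrable_const (max |l i t| |u i t|))
          (((hmeas_eval i t).comp measurable_fst).aestronglyMeasurable) ?_
        filter_upwards [hae1] with p hp
        rw [Real.norm_eq_abs, abs_le]
        obtain ⟨h1, h2⟩ := hp i t
        refine ⟨?_, ?_⟩
        · have h3 := neg_abs_le (l i t); have h4 := le_max_left |l i t| |u i t|; linarith
        · have h3 := le_abs_self (u i t); have h4 := le_max_right |l i t| |u i t|; linarith
      have hi2 : ∀ i t, Integrable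
          (fun p : (Fin I → Fin T → ℝ) × (Fin I → Fin T → ℝ) => p.2 i t) π := by
        intro i t
        refine Integrable.mono' (integrable_const (max |l i t| |u i t|))
          (((hmeas_eval i t).comp measurable_snd).aestronglyMeasurable) ?_
        filter_upwards [hae2] with p hp
        rw [Real.norm_eq_abs, abs_le]
        obtain ⟨h1, h2⟩ := hp i t
        refine ⟨?_, ?_⟩
        · have h3 := neg_abs_le (l i t); have h4 := le_max_left |l i t| |u i t|; linarith
        · have h3 := le_abs_self (u i t); have h4 := le_max_right |l i t| |u i t|; linarith
      have hi1s : ∀ t, Integrable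
          (fun p : (Fin I → Fin T → ℝ) × (Fin I → Fin T → ℝ) => ∑ i, p.1 i t) π :=
        fun t => integrable_finset_sum _ fun i _ => hi1 i t
      have hi2s : ∀ t, Integrable
          (fun p : (Fin I → Fin T → ℝ) × (Fin I → Fin T → ℝ) => ∑ i, p.2 i t) π :=
        fun t => integrable_finset_sum _ fun i _ => hi2 i t
      have hmt' : ∀ t, mt t = ∫ p, (∑ i, p.1 i t) ∂π := by
        intro t
        rw [hmtdef t]
        rw [← hπ1, integral_map measurable_fst.aemeasurable
          (hmeas_sum t).aestronglyMeasurable]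
      have he' : ∀ t, e t = ∫ p, (∑ i, p.2 i t) ∂π := by
        intro t
        have h1 : ∫ p, (∑ i, p.2 i t) ∂π
            = ∫ w, (∑ i, w i t) ∂(π.map Prod.snd) := by
          rw [integral_map measurable_snd.aemeasurable (hmeas_sum t).aestronglyMeasurable]
        rw [h1, hπ2, integral_smul_measure,
          integral_finset_sum_measure
            (fun s _ => integrable_dirac_of (hmeas_sum t).stronglyMeasurable _)]
        simp only [integral_dirac]
        rw [ENNReal.toReal_inv, ENNReal.toReal_natCast, smul_eq_mul, hedef t]
        simp only [one_div]
        congr 1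
        exact Finset.sum_comm
      have habs : ∀ t, |mt t - e t| ≤ ∫ p, (∑ i, |p.1 i t - p.2 i t|) ∂π := by
        intro t
        rw [hmt' t, he' t, ← integral_sub (hi1s t) (hi2s t)]
        calc |∫ p, ((∑ i, p.1 i t) - ∑ i, p.2 i t) ∂π|
            ≤ ∫ p, |(∑ i, p.1 i t) - ∑ i, p.2 i t| ∂π := by
              simpa [Real.norm_eq_abs] using
                norm_integral_le_integral_norm (μ := π)
                  (fun p : (Fin I → Fin T → ℝ) × (Fin I → Fin T → ℝ) =>
                    (∑ i, p.1 i t) - ∑ i, p.2 i t)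
          _ ≤ ∫ p, (∑ i, |p.1 i t - p.2 i t|) ∂π := by
              refine integral_mono ((hi1s t).sub (hi2s t)).abs
                (integrable_finset_sum _ fun i _ => ((hi1 i t).sub (hi2 i t)).abs) ?_
              intro p
              calc |∑ i, p.1 i t - ∑ i, p.2 i t|
                  = |∑ i, (p.1 i t - p.2 i t)| := by rw [Finset.sum_sub_distrib]
                _ ≤ ∑ i, |p.1 i t - p.2 i t| := Finset.abs_sum_le_sum_abs _ _
      have hsummed : ∑ t, |mt t - e t|
          ≤ ∫ p, (∑ t, ∑ i, |p.1 i t - p.2 i t|) ∂π := by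
        rw [integral_finset_sum (μ := π)
          (f := fun (t : Fin T) (p : (Fin I → Fin T → ℝ) × (Fin I → Fin T → ℝ)) =>
            ∑ i, |p.1 i t - p.2 i t|) Finset.univ
          (fun t _ => integrable_finset_sum _ fun i _ => ((hi1 i t).sub (hi2 i t)).abs)]
        exact Finset.sum_le_sum fun t _ => habs t
      have hgint : Integrable
          (fun p : (Fin I → Fin T → ℝ) × (Fin I → Fin T → ℝ) =>
            ∑ i, ∑ t, |p.1 i t - p.2 i t|) π :=
        integrable_finset_sum _ fun i _ =>
          integrable_finset_sum _ fun t _ => ((hi1 i t).sub (hi2 i t)).abs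
      have hlast : ∫ p, (∑ i, ∑ t, |p.1 i t - p.2 i t|) ∂π ≤ ε + δ := by
        rw [integral_eq_lintegral_of_nonneg_ae
          (Filter.Eventually.of_forall fun p => by positivity) hgint.aestronglyMeasurable]
        have hmono := ENNReal.toReal_mono (by simp : ENNReal.ofReal (ε+δ) ≠ ⊤) hπc
        rwa [ENNReal.toReal_ofReal (by linarith)] at hmono
      have hswap : ∫ p, (∑ t, ∑ i, |p.1 i t - p.2 i t|) ∂π
          = ∫ p, (∑ i, ∑ t, |p.1 i t - p.2 i t|) ∂π := by
        congr 1
        funext p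
        exact Finset.sum_comm
      have hmain : ∑ t, |mt t - e t| ≤ ε + δ := by
        calc ∑ t, |mt t - e t| ≤ ∫ p, (∑ t, ∑ i, |p.1 i t - p.2 i t|) ∂π := hsummed
          _ = ∫ p, (∑ i, ∑ t, |p.1 i t - p.2 i t|) ∂π := hswap
          _ ≤ ε + δ := hlast
      rw [hδdef] at hmain
      linarith
    -- assemble LP feasible point
    obtain ⟨zp, hzpdef⟩ : ∃ zp : Fin T → ℝ, ∀ t, zp t = max ((S:ℝ) * (mt t - e t)) 0 :=
      ⟨_, fun t => rfl⟩
    obtain ⟨zm, hzmdef⟩ : ∃ zm : Fin T → ℝ, ∀ t, zm t = max (-((S:ℝ) * (mt t - e t))) 0 :=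
      ⟨_, fun t => rfl⟩
    have hzpm : ∀ t, zp t - zm t = (S:ℝ) * (mt t - e t) := fun t => by
      rw [hzpdef t, hzmdef t]; exact max_zero_sub_max_neg_zero_eq_self _
    have habs2 : ∀ t, zp t + zm t = |(S:ℝ) * (mt t - e t)| := fun t => by
      rw [hzpdef t, hzmdef t]; exact max_zero_add_max_neg_zero_eq_abs_self _
    have hyB : (1 / (S:ℝ)) * ∑ t, c t * (zp t - zm t) ∈ B := by
      refine ⟨zp, zm, fun t => by rw [hzpdef t]; exact le_max_right _ _,
        fun t => by rw [hzmdef t]; exact le_max_right _ _, ?_, ?_, ?_, rfl⟩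
      · have hsum2 : ∑ t, (zp t + zm t) = (S:ℝ) * ∑ t, |mt t - e t| := by
          rw [Finset.mul_sum]
          refine Finset.sum_congr rfl fun t _ => ?_
          rw [habs2 t, abs_mul, abs_of_pos hSpos]
        rw [hsum2, ← mul_assoc]
        have h1S : (1 / (S:ℝ)) * (S:ℝ) = 1 := by field_simp
        rw [h1S, one_mul]
        exact hd1
      · exact fun t => by rw [hzpdef t]; exact max_le (hdub t) (hzubp0 t)
      · exact fun t => by rw [hzmdef t]; exact max_le (hdlb t) (hzubm0 t)
    have hval : (1 / (S:ℝ)) * ∑ t, c t * (zp t - zm t) = ∑ t, c t * (mt t - e t) := by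
      rw [Finset.mul_sum]
      refine Finset.sum_congr rfl fun t _ => ?_
      rw [hzpm t]
      field_simp
    have hxgc : x = gc + ∑ t, c t * (mt t - e t) := by
      rw [hxg, hgc, ← Finset.sum_add_distrib]
      refine Finset.sum_congr rfl fun t _ => ?_
      rw [hedef t]
      ring
    have hle := le_csSup hBbdd hyB
    rw [hval] at hle
    rw [hxgc, hgv]
    linarith
  have hAne : A.Nonempty := ⟨gc + 0, key2 0 hB0⟩
  have hAbdd : BddAbove A := ⟨gc + gv, key1⟩
  apply le_antisymm
  · exact csSup_le hAne key1
  · have h1 : ∀ y ∈ B, y ≤ sSup A - gc := by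
      intro y hy
      have := le_csSup hAbdd (key2 y hy)
      linarith
    have h2 : gv ≤ sSup A - gc := by
      rw [hgv]
      exact csSup_le hBne h1
    linarith
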